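/- Let G be a finite group with normal subgroups Z_p and Z_q of distinct prime orders p and q such that G' = [G,G] = Z_p × Z_q, and let a, b, c ∈ G with [a,b] generating Z_p, [a,c] generating Z_q, and a centralizing G'. Then c centralizes Z_p and b centralizes Z_q. -/
import Mathlib

private lemma conjmem' {G : Type*} [Group G] {N : Subgroup G} (hN : N.Normal)
    {x : G} (hx : x ∈ N) (g : G) : g⁻¹ * x * g ∈ N := by
  simpa using hN.conj_mem x hx g⁻¹

private lemma mem_comm' {G : Type*} [Group G] (g h : G) :
    g * h * g⁻¹ * h⁻¹ ∈ commutator G := by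
  rw [commutator_def]
  exact Subgroup.commutator_mem_commutator (Subgroup.mem_top g) (Subgroup.mem_top h)

/-- Suppose `G' = Z_p × Z_q` with `Z_p, Z_q` normal of distinct prime orders,
`⟨[a,b]⟩ = Z_p`, `⟨[a,c]⟩ = Z_q`, and `a` centralizes `G'`. Then `c` centralizes
`Z_p` and `b` centralizes `Z_q`. -/
theorem stmt_14 {G : Type*} [Group G] [Finite G] (p q : ℕ)
    (hp : p.Prime) (hq : q.Prime) (hpq : p ≠ q)
    (Zp Zq : Subgroup G) (hZpN : Zp.Normal) (hZqN : Zq.Normal)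
    (hZp : Nat.card Zp = p) (hZq : Nat.card Zq = q)
    (hG' : commutator G = Zp ⊔ Zq)
    (a b c : G)
    (hab : Subgroup.zpowers (a⁻¹ * b⁻¹ * a * b) = Zp)
    (hac : Subgroup.zpowers (a⁻¹ * c⁻¹ * a * c) = Zq)
    (haCent : ∀ γ ∈ commutator G, a * γ = γ * a) :
    (∀ x ∈ Zp, c * x = x * c) ∧ (∀ y ∈ Zq, b * y = y * b) := by
  set u : G := a⁻¹ * b⁻¹ * a * b with hu_def
  set v : G := a⁻¹ * c⁻¹ * a * c with hv_def
  have hu : u ∈ Zp := hab ▸ Subgroup.mem_zpowers u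
  have hv : v ∈ Zq := hac ▸ Subgroup.mem_zpowers v
  have hZple : Zp ≤ commutator G := hG' ▸ le_sup_left
  have hZqle : Zq ≤ commutator G := hG' ▸ le_sup_right
  -- triviality of the intersection
  have htriv : ∀ x : G, x ∈ Zp → x ∈ Zq → x = 1 := by
    intro x hxp hxq
    have h1 : orderOf x ∣ p := by
      have := orderOf_dvd_natCard (⟨x, hxp⟩ : Zp)
      rwa [Subgroup.orderOf_mk, hZp] at this
    have h2 : orderOf x ∣ q := by
      have := orderOf_dvd_natCard (⟨x, hxq⟩ : Zq)
      rwa [Subgroup.orderOf_mk, hZq] at this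
    have hco : Nat.Coprime p q := (Nat.coprime_primes hp hq).mpr hpq
    have : orderOf x = 1 := Nat.eq_one_of_dvd_coprimes hco h1 h2
    exact orderOf_eq_one_iff.mp this
  -- a conjugation fixes commutator elements
  have hfix : ∀ x ∈ commutator G, a⁻¹ * x * a = x := by
    intro x hx
    have h := haCent x hx
    rw [mul_assoc, ← h]
    group
  -- first Hall–Witt instance, triple (b, a, c)
  have HW1 : (a⁻¹ * ((b⁻¹*a*b*a⁻¹)⁻¹ * c⁻¹ * (b⁻¹*a*b*a⁻¹) * c) * a) *
      (c⁻¹ * ((a⁻¹*c*a*c⁻¹)⁻¹ * b⁻¹ * (a⁻¹*c*a*c⁻¹) * b) * c) *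
      (b⁻¹ * ((c⁻¹*b*c*b⁻¹)⁻¹ * a⁻¹ * (c⁻¹*b*c*b⁻¹) * a) * b) = 1 := by group
  -- the third factor is trivial since `a` centralizes `G'`
  have hγ1 : c⁻¹*b*c*b⁻¹ ∈ commutator G := by simpa using mem_comm' c⁻¹ b
  have h3 : (c⁻¹*b*c*b⁻¹)⁻¹ * a⁻¹ * (c⁻¹*b*c*b⁻¹) * a = 1 := by
    have h := haCent _ hγ1
    calc (c⁻¹*b*c*b⁻¹)⁻¹ * a⁻¹ * (c⁻¹*b*c*b⁻¹) * a
        = (c⁻¹*b*c*b⁻¹)⁻¹ * a⁻¹ * ((c⁻¹*b*c*b⁻¹) * a) := by group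
      _ = (c⁻¹*b*c*b⁻¹)⁻¹ * a⁻¹ * (a * (c⁻¹*b*c*b⁻¹)) := by rw [h]
      _ = 1 := by group
  have HW1' : (a⁻¹ * ((b⁻¹*a*b*a⁻¹)⁻¹ * c⁻¹ * (b⁻¹*a*b*a⁻¹) * c) * a) *
      (c⁻¹ * ((a⁻¹*c*a*c⁻¹)⁻¹ * b⁻¹ * (a⁻¹*c*a*c⁻¹) * b) * c) = 1 := by
    have := HW1
    rw [h3] at this
    simpa using this
  -- rewrite the first factor
  have hbab : b⁻¹*a*b*a⁻¹ = u := by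
    have h := haCent u (hZple hu)
    calc b⁻¹*a*b*a⁻¹ = a * u * a⁻¹ := by rw [hu_def]; group
      _ = u * a * a⁻¹ := by rw [h]
      _ = u := by group
  have hX : u⁻¹ * c⁻¹ * u * c ∈ Zp := by
    have : u⁻¹ * c⁻¹ * u * c = u⁻¹ * (c⁻¹ * u * c) := by group
    rw [this]
    exact Zp.mul_mem (Zp.inv_mem hu) (conjmem' hZpN hu c)
  have hF1 : a⁻¹ * ((b⁻¹*a*b*a⁻¹)⁻¹ * c⁻¹ * (b⁻¹*a*b*a⁻¹) * c) * a
      = u⁻¹ * c⁻¹ * u * c := by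
    rw [hbab]
    exact hfix _ (hZple hX)
  -- second factor lies in Zq
  have hw : a⁻¹*c*a*c⁻¹ ∈ Zq := by
    have : a⁻¹*c*a*c⁻¹ = c⁻¹⁻¹ * v⁻¹ * c⁻¹ := by rw [hv_def]; group
    rw [this]
    exact conjmem' hZqN (Zq.inv_mem hv) c⁻¹
  have hF2 : c⁻¹ * ((a⁻¹*c*a*c⁻¹)⁻¹ * b⁻¹ * (a⁻¹*c*a*c⁻¹) * b) * c ∈ Zq := by
    refine conjmem' hZqN ?_ c
    have : (a⁻¹*c*a*c⁻¹)⁻¹ * b⁻¹ * (a⁻¹*c*a*c⁻¹) * b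
        = (a⁻¹*c*a*c⁻¹)⁻¹ * (b⁻¹ * (a⁻¹*c*a*c⁻¹) * b) := by group
    rw [this]
    exact Zq.mul_mem (Zq.inv_mem hw) (conjmem' hZqN hw b)
  -- conclude [u, c] = 1
  have huc : u⁻¹ * c⁻¹ * u * c = 1 := by
    rw [hF1] at HW1'
    have hmemq : u⁻¹ * c⁻¹ * u * c ∈ Zq := by
      have : u⁻¹ * c⁻¹ * u * c =
          (c⁻¹ * ((a⁻¹*c*a*c⁻¹)⁻¹ * b⁻¹ * (a⁻¹*c*a*c⁻¹) * b) * c)⁻¹ := by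
        rw [eq_inv_iff_mul_eq_one]; exact HW1'
      rw [this]
      exact Zq.inv_mem hF2
    exact htriv _ hX hmemq
  have hcu : Commute c u := by
    show c * u = u * c
    calc c * u = c * u * 1 := by rw [mul_one]
      _ = c * u * (u⁻¹ * c⁻¹ * u * c) := by rw [huc]
      _ = u * c := by group
  -- second Hall–Witt instance, triple (c, a, b)
  have HW2 : (a⁻¹ * ((c⁻¹*a*c*a⁻¹)⁻¹ * b⁻¹ * (c⁻¹*a*c*a⁻¹) * b) * a) *
      (b⁻¹ * ((a⁻¹*b*a*b⁻¹)⁻¹ * c⁻¹ * (a⁻¹*b*a*b⁻¹) * c) * b) *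
      (c⁻¹ * ((b⁻¹*c*b*c⁻¹)⁻¹ * a⁻¹ * (b⁻¹*c*b*c⁻¹) * a) * c) = 1 := by group
  have hγ2 : b⁻¹*c*b*c⁻¹ ∈ commutator G := by simpa using mem_comm' b⁻¹ c
  have h3' : (b⁻¹*c*b*c⁻¹)⁻¹ * a⁻¹ * (b⁻¹*c*b*c⁻¹) * a = 1 := by
    have h := haCent _ hγ2
    calc (b⁻¹*c*b*c⁻¹)⁻¹ * a⁻¹ * (b⁻¹*c*b*c⁻¹) * a
        = (b⁻¹*c*b*c⁻¹)⁻¹ * a⁻¹ * ((b⁻¹*c*b*c⁻¹) * a) := by group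
      _ = (b⁻¹*c*b*c⁻¹)⁻¹ * a⁻¹ * (a * (b⁻¹*c*b*c⁻¹)) := by rw [h]
      _ = 1 := by group
  have HW2' : (a⁻¹ * ((c⁻¹*a*c*a⁻¹)⁻¹ * b⁻¹ * (c⁻¹*a*c*a⁻¹) * b) * a) *
      (b⁻¹ * ((a⁻¹*b*a*b⁻¹)⁻¹ * c⁻¹ * (a⁻¹*b*a*b⁻¹) * c) * b) = 1 := by
    have := HW2
    rw [h3'] at this
    simpa using this
  have hcac : c⁻¹*a*c*a⁻¹ = v := by
    have h := haCent v (hZqle hv)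
    calc c⁻¹*a*c*a⁻¹ = a * v * a⁻¹ := by rw [hv_def]; group
      _ = v * a * a⁻¹ := by rw [h]
      _ = v := by group
  have hY : v⁻¹ * b⁻¹ * v * b ∈ Zq := by
    have : v⁻¹ * b⁻¹ * v * b = v⁻¹ * (b⁻¹ * v * b) := by group
    rw [this]
    exact Zq.mul_mem (Zq.inv_mem hv) (conjmem' hZqN hv b)
  have hG1 : a⁻¹ * ((c⁻¹*a*c*a⁻¹)⁻¹ * b⁻¹ * (c⁻¹*a*c*a⁻¹) * b) * a
      = v⁻¹ * b⁻¹ * v * b := by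
    rw [hcac]
    exact hfix _ (hZqle hY)
  have hw' : a⁻¹*b*a*b⁻¹ ∈ Zp := by
    have : a⁻¹*b*a*b⁻¹ = b⁻¹⁻¹ * u⁻¹ * b⁻¹ := by rw [hu_def]; group
    rw [this]
    exact conjmem' hZpN (Zp.inv_mem hu) b⁻¹
  have hG2 : b⁻¹ * ((a⁻¹*b*a*b⁻¹)⁻¹ * c⁻¹ * (a⁻¹*b*a*b⁻¹) * c) * b ∈ Zp := by
    refine conjmem' hZpN ?_ b
    have : (a⁻¹*b*a*b⁻¹)⁻¹ * c⁻¹ * (a⁻¹*b*a*b⁻¹) * c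
        = (a⁻¹*b*a*b⁻¹)⁻¹ * (c⁻¹ * (a⁻¹*b*a*b⁻¹) * c) := by group
    rw [this]
    exact Zp.mul_mem (Zp.inv_mem hw') (conjmem' hZpN hw' c)
  have hvb : v⁻¹ * b⁻¹ * v * b = 1 := by
    rw [hG1] at HW2'
    have hmemp : v⁻¹ * b⁻¹ * v * b ∈ Zp := by
      have : v⁻¹ * b⁻¹ * v * b =
          (b⁻¹ * ((a⁻¹*b*a*b⁻¹)⁻¹ * c⁻¹ * (a⁻¹*b*a*b⁻¹) * c) * b)⁻¹ := by
        rw [eq_inv_iff_mul_eq_one]; exact HW2'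
      rw [this]
      exact Zp.inv_mem hG2
    exact htriv _ hmemp hY
  have hbv : Commute b v := by
    show b * v = v * b
    calc b * v = b * v * 1 := by rw [mul_one]
      _ = b * v * (v⁻¹ * b⁻¹ * v * b) := by rw [hvb]
      _ = v * b := by group
  constructor
  · intro x hx
    rw [← hab] at hx
    obtain ⟨n, rfl⟩ := hx
    exact (hcu.zpow_right n)
  · intro y hy
    rw [← hac] at hy
    obtain ⟨n, rfl⟩ := hy
    exact (hbv.zpow_right n)
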